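/- For the reduced Oseen bilinear form A_red on the diagonal, if ∇·a = 0 and (τ_M (a·∇u^h + ∇p̃), ∇·(2ν∇^s u^h)) ≥ −½(τ_M(a·∇u^h + ∇p̃), a·∇u^h + ∇p̃) − ½(τ_M ∇·(2ν∇^s u^h), ∇·(2ν∇^s u^h)) (Young's inequality) and k(u^h,u^h) ≥ (τ_M ∇·(2ν∇^s u^h), ∇·(2ν∇^s u^h)) (from the inverse estimate and the definition of τ_M), then A_red((u^h,p^h,p̃),(u^h,p^h,p̃)) ≥ ¼ k(u^h,u^h) + ½ ‖τ_M^{1/2}(a·∇u^h + ∇p̃)‖² + ¼ ‖τ_M^{1/2} ∇·(2ν∇^s u^h)‖² + ‖τ_C^{1/2} ∇·u^h‖². -/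

import Mathlib

open MeasureTheory
open scoped RealInnerProductSpace

/-- Euclidean space ℝ^d. -/
abbrev E (d : ℕ) := EuclideanSpace ℝ (Fin d)

/-- Advective derivative a·∇u. -/
noncomputable def adv {d : ℕ} (a : E d) (u : E d → E d) (x : E d) : E d := fderiv ℝ u x a

/-- (i,j) entry of the symmetric gradient ∇^s u. -/
noncomputable def sg {d : ℕ} (u : E d → E d) (x : E d) (i j : Fin d) : ℝ :=
  (fderiv ℝ u x (EuclideanSpace.single i 1) j +
    fderiv ℝ u x (EuclideanSpace.single j 1) i) / 2

/-- Divergence ∇·u. -/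
noncomputable def divg {d : ℕ} (u : E d → E d) (x : E d) : ℝ :=
  ∑ i, fderiv ℝ u x (EuclideanSpace.single i 1) i

/-- Viscous term ∇·(2ν∇^s u). -/
noncomputable def divVisc {d : ℕ} (ν : ℝ) (u : E d → E d) (x : E d) : E d :=
  (WithLp.equiv 2 (Fin d → ℝ)).symm fun i =>
    ∑ j, fderiv ℝ (fun y => 2 * ν * sg u y i j) x (EuclideanSpace.single j 1)

/-- Convective form c(a,u,v) = ∫_Ω (a·∇u)·v. -/
noncomputable def cForm {d : ℕ} (Ω : Set (E d)) (a : E d) (u v : E d → E d) : ℝ :=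
  ∫ x in Ω, ⟪adv a u x, v x⟫

/-- Diffusive form k(u,v) = ∫_Ω 2ν∇^s u : ∇^s v. -/
noncomputable def kForm {d : ℕ} (Ω : Set (E d)) (ν : ℝ) (u v : E d → E d) : ℝ :=
  ∫ x in Ω, 2 * ν * ∑ i, ∑ j, sg u x i j * sg v x i j

/-- Constraint form b(v,q) = ∫_Ω (∇·v) q. -/
noncomputable def bForm {d : ℕ} (Ω : Set (E d)) (v : E d → E d) (q : E d → ℝ) : ℝ :=
  ∫ x in Ω, divg v x * q x

/-- The reduced Oseen bilinear form A_red. -/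
noncomputable def Ared {d : ℕ} (Ω : Set (E d)) (a : E d) (ν τM τC : ℝ)
    (u : E d → E d) (p pt : E d → ℝ) (v : E d → E d) (q qt : E d → ℝ) : ℝ :=
  cForm Ω a u v + kForm Ω ν u v - bForm Ω v p + bForm Ω u q
    + (∫ x in Ω, τM * ⟪adv a u x - divVisc ν u x + gradient pt x,
        adv a v x + gradient qt x⟫)
    + ∫ x in Ω, τC * (divg u x * divg v x)

section Aux

theorem sg_contDiff {d : ℕ} {u : E d → E d} (hu : ContDiff ℝ 2 u) (i j : Fin d) :
    ContDiff ℝ 1 (fun y => sg u y i j) := by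
  have h1 : ContDiff ℝ 1 (fun y => fderiv ℝ u y (EuclideanSpace.single i 1)) :=
    (hu.fderiv_right (by norm_num)).clm_apply contDiff_const
  have h2 : ContDiff ℝ 1 (fun y => fderiv ℝ u y (EuclideanSpace.single j 1)) :=
    (hu.fderiv_right (by norm_num)).clm_apply contDiff_const
  have p : ∀ k : Fin d, ContDiff ℝ 1 (fun v : E d => v k) := fun k =>
    (EuclideanSpace.proj k : E d →L[ℝ] ℝ).contDiff
  exact (((p j).comp h1).add ((p i).comp h2)).div_const 2

theorem sg_contDiff' {d : ℕ} (ν : ℝ) {u : E d → E d} (hu : ContDiff ℝ 2 u) (i j : Fin d) :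
    ContDiff ℝ 1 (fun y : E d => 2 * ν * sg u y i j) := contDiff_const.mul (sg_contDiff hu i j)

theorem divVisc_continuous {d : ℕ} (ν : ℝ) {u : E d → E d} (hu : ContDiff ℝ 2 u) :
    Continuous (divVisc ν u) := by
  have h : Continuous fun x => (fun i => ∑ j,
      fderiv ℝ (fun y => 2 * ν * sg u y i j) x (EuclideanSpace.single j 1) : Fin d → ℝ) := by
    refine continuous_pi fun i => continuous_finset_sum _ fun j _ => ?_
    exact ((sg_contDiff' ν hu i j).continuous_fderiv one_ne_zero).clm_apply continuous_const
  exact ((PiLp.continuousLinearEquiv 2 ℝ (fun _ : Fin d => ℝ)).symm.continuous.comp h : _)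

theorem gradient_continuous {d : ℕ} {pt : E d → ℝ} (hpt : ContDiff ℝ 1 pt) :
    Continuous (gradient pt) := by
  have : gradient pt = fun x => (InnerProductSpace.toDual ℝ (E d)).symm (fderiv ℝ pt x) := rfl
  rw [this]
  exact (InnerProductSpace.toDual ℝ (E d)).symm.continuous.comp (hpt.continuous_fderiv one_ne_zero)

end Aux

/-- Coercivity step of the inf-sup stability lemma: on the diagonal, given the Young
inequality for the cross term and the inverse-estimate bound k(u^h,u^h) ≥
‖τ_M^{1/2}∇·(2ν∇^s u^h)‖², the reduced Oseen form is bounded below as stated. -/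
theorem stmt13 (d : ℕ) (Ω : Set (E d)) (hΩo : IsOpen Ω) (hΩb : Bornology.IsBounded Ω)
    (a : E d) (ν τM τC : ℝ) (hν : 0 < ν) (hτM : 0 < τM) (hτC : 0 < τC)
    (uh : E d → E d) (ph pt : E d → ℝ)
    (hu : ContDiff ℝ 2 uh) (hsupp : HasCompactSupport uh) (hsub : tsupport uh ⊆ Ω)
    (hpt : ContDiff ℝ 1 pt)
    (hYoung : (∫ x in Ω, τM * ⟪adv a uh x + gradient pt x, divVisc ν uh x⟫) ≥
      -(1 / 2) * (∫ x in Ω, τM * ‖adv a uh x + gradient pt x‖ ^ 2)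
        - (1 / 2) * ∫ x in Ω, τM * ‖divVisc ν uh x‖ ^ 2)
    (hK : kForm Ω ν uh uh ≥ ∫ x in Ω, τM * ‖divVisc ν uh x‖ ^ 2) :
    Ared Ω a ν τM τC uh ph pt uh ph pt ≥
      (1 / 4) * kForm Ω ν uh uh
        + (1 / 2) * (∫ x in Ω, τM * ‖adv a uh x + gradient pt x‖ ^ 2)
        + (1 / 4) * (∫ x in Ω, τM * ‖divVisc ν uh x‖ ^ 2)
        + ∫ x in Ω, τC * (divg uh x) ^ 2 := by
  classical
  have hΩm : MeasurableSet Ω := hΩo.measurableSet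
  have hcl : IsCompact (closure Ω) := hΩb.isCompact_closure
  have hintOn : ∀ {f : E d → ℝ}, Continuous f → IntegrableOn f Ω volume := fun hf =>
    ((hf.continuousOn).integrableOn_compact hcl).mono_set subset_closure
  have hcu : Continuous uh := hu.continuous
  have hadv : Continuous (adv a uh) :=
    (hu.continuous_fderiv two_ne_zero).clm_apply continuous_const
  have hgrad : Continuous (gradient pt) := gradient_continuous hpt
  have hVc : Continuous (divVisc ν uh) := divVisc_continuous ν hu
  have hXc : Continuous (fun x => adv a uh x + gradient pt x) := hadv.add hgrad
  set X : E d → E d := fun x => adv a uh x + gradient pt x with hXdef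
  set V : E d → E d := fun x => divVisc ν uh x with hVdef
  set A : ℝ := ∫ x in Ω, τM * ‖adv a uh x + gradient pt x‖ ^ 2 with hAdef
  set B : ℝ := ∫ x in Ω, τM * ‖divVisc ν uh x‖ ^ 2 with hBdef
  -- cForm vanishes
  have hc0 : cForm Ω a uh uh = 0 := by
    have hdiff : Differentiable ℝ uh := hu.differentiable two_ne_zero
    have hsup1 : HasCompactSupport (fun x => (⟪adv a uh x, uh x⟫ : ℝ)) := by
      refine hsupp.mono fun x hx => ?_
      simp only [Function.mem_support] at hx ⊢
      intro h0
      exact hx (by simp [h0])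
    have hsup2 : HasCompactSupport (fun x => (⟪uh x, adv a uh x⟫ : ℝ)) := by
      refine hsupp.mono fun x hx => ?_
      simp only [Function.mem_support] at hx ⊢
      intro h0
      exact hx (by simp [h0])
    have hsup3 : HasCompactSupport (fun x => (⟪uh x, uh x⟫ : ℝ)) := by
      refine hsupp.mono fun x hx => ?_
      simp only [Function.mem_support] at hx ⊢
      intro h0
      exact hx (by simp [h0])
    have hi1 : Integrable (fun x => (⟪adv a uh x, uh x⟫ : ℝ)) volume :=
      (hadv.inner hcu).integrable_of_hasCompactSupport hsup1
    have hi2 : Integrable (fun x => (⟪uh x, adv a uh x⟫ : ℝ)) volume :=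
      (hcu.inner hadv).integrable_of_hasCompactSupport hsup2
    have hi3 : Integrable (fun x => (⟪uh x, uh x⟫ : ℝ)) volume :=
      (hcu.inner hcu).integrable_of_hasCompactSupport hsup3
    have key : (∫ x, (⟪uh x, adv a uh x⟫ : ℝ)) = -∫ x, (⟪adv a uh x, uh x⟫ : ℝ) :=
      integral_bilinear_fderiv_right_eq_neg_left_of_integrable
        (B := innerSL ℝ (E := E d)) hi1 hi2 hi3 (fun x _ => hdiff x) (fun x _ => hdiff x)
    have hzero : (∫ x, (⟪adv a uh x, uh x⟫ : ℝ)) = 0 := by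
      have hs : (∫ x, (⟪uh x, adv a uh x⟫ : ℝ)) = ∫ x, (⟪adv a uh x, uh x⟫ : ℝ) := by
        congr 1; funext x; exact real_inner_comm _ _
      rw [hs] at key
      linarith [key]
    have : cForm Ω a uh uh = ∫ x, (⟪adv a uh x, uh x⟫ : ℝ) := by
      refine setIntegral_eq_integral_of_forall_compl_eq_zero fun x hx => ?_
      have : uh x = 0 := image_eq_zero_of_notMem_tsupport fun hxt => hx (hsub hxt)
      simp [this]
    rw [this, hzero]
  -- the stabilization term splits
  have hIA : IntegrableOn (fun x => τM * ‖X x‖ ^ 2) Ω volume :=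
    hintOn (continuous_const.mul ((hXc.norm).pow 2))
  have hIB : IntegrableOn (fun x => τM * ‖V x‖ ^ 2) Ω volume :=
    hintOn (continuous_const.mul ((hVc.norm).pow 2))
  have hIXV : IntegrableOn (fun x => τM * ⟪X x, V x⟫) Ω volume :=
    hintOn (continuous_const.mul (hXc.inner hVc))
  have hT : (∫ x in Ω, τM * ⟪adv a uh x - divVisc ν uh x + gradient pt x,
      adv a uh x + gradient pt x⟫)
      = A - ∫ x in Ω, τM * ⟪X x, V x⟫ := by
    have hpt1 : (fun x => τM * ⟪adv a uh x - divVisc ν uh x + gradient pt x,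
        adv a uh x + gradient pt x⟫)
        = fun x => τM * ‖X x‖ ^ 2 - τM * ⟪X x, V x⟫ := by
      funext x
      have hre : adv a uh x - divVisc ν uh x + gradient pt x = X x - V x := by
        simp only [hXdef, hVdef]; abel
      rw [hre, inner_sub_left, real_inner_self_eq_norm_sq,
        real_inner_comm (V x) (X x)]
      ring
    rw [hpt1, integral_sub hIA hIXV]
  -- pointwise Young bound
  have hIle : (∫ x in Ω, τM * ⟪X x, V x⟫) ≤ (1 / 2) * A + (1 / 2) * B := by
    have step : (∫ x in Ω, τM * ⟪X x, V x⟫)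
        ≤ ∫ x in Ω, ((1 / 2) * (τM * ‖X x‖ ^ 2) + (1 / 2) * (τM * ‖V x‖ ^ 2)) := by
      refine setIntegral_mono_on hIXV ((hIA.const_mul _).add (hIB.const_mul _)) hΩm
        fun x _ => ?_
      have h1 : (⟪X x, V x⟫ : ℝ) ≤ ‖X x‖ * ‖V x‖ := real_inner_le_norm _ _
      nlinarith [sq_nonneg (‖X x‖ - ‖V x‖), norm_nonneg (X x), norm_nonneg (V x), hτM.le]
    refine le_trans step (le_of_eq ?_)
    rw [integral_add (hIA.const_mul _) (hIB.const_mul _),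
      integral_const_mul ((1:ℝ)/2) (fun x => τM * ‖X x‖ ^ 2),
      integral_const_mul ((1:ℝ)/2) (fun x => τM * ‖V x‖ ^ 2)]
  -- divergence term
  have hCeq : (∫ x in Ω, τC * (divg uh x * divg uh x)) = ∫ x in Ω, τC * (divg uh x) ^ 2 := by
    congr 1; funext x; ring
  unfold Ared
  rw [hc0, hT, hCeq]
  linarith [hK, hIle]
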